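/- Let F = f + g with f convex L-smooth and g proper convex lsc, F_* = min F attained on the set Ω_*. Suppose F satisfies the HEB with θ ∈ (1/2, 1] and constant c on the ξ-sublevel set S_ξ. Then for all x ∈ S_ξ, dist(x, Ω_*) ≤ (2/L + 2c²ξ^{2θ−1}) ‖G(x)‖, where G(x) = L(x − prox_{g/L}(x − ∇f(x)/L)). -/

import Mathlib

open RealInnerProductSpace Topology

section aux
variable {E : Type*} [NormedAddCommGroup E] [InnerProductSpace ℝ E] [CompleteSpace E]

lemma line_hasDerivAt (f : E → ℝ) (f' : E → E) (hgrad : ∀ x, HasGradientAt f (f' x) x)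
    (x d : E) (t : ℝ) :
    HasDerivAt (fun s : ℝ => f (x + s • d)) ⟪f' (x + t • d), d⟫ t := by
  have hcurve : HasDerivAt (fun s : ℝ => x + s • d) d t := by
    simpa using ((hasDerivAt_id t).smul_const d).const_add x
  have h := (hgrad (x + t • d)).hasFDerivAt.comp_hasDerivAt t hcurve
  simp [Function.comp] at h
  exact h

lemma convex_grad_ineq (f : E → ℝ) (f' : E → E) (hgrad : ∀ x, HasGradientAt f (f' x) x)
    (hconv : ConvexOn ℝ Set.univ f) (x y : E) :
    f x + ⟪f' x, y - x⟫ ≤ f y := by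
  have hd : HasDerivAt (fun s : ℝ => f (x + s • (y - x))) ⟪f' x, y - x⟫ 0 := by
    simpa using line_hasDerivAt f f' hgrad x (y - x) 0
  have hslope := hasDerivAt_iff_tendsto_slope.1 hd
  have hmono : 𝓝[>] (0:ℝ) ≤ 𝓝[≠] (0:ℝ) :=
    nhdsWithin_mono _ (fun t ht => ne_of_gt ht)
  have h2 := hslope.mono_left hmono
  have hev : ∀ᶠ t in 𝓝[>] (0:ℝ),
      slope (fun s : ℝ => f (x + s • (y - x))) 0 t ≤ f y - f x := by
    filter_upwards [Ioo_mem_nhdsGT_of_mem (by norm_num : (0:ℝ) ∈ Set.Ico 0 1)] with t ht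
    have hcomb : x + t • (y - x) = (1 - t) • x + t • y := by module
    have hcv := hconv.2 (Set.mem_univ x) (Set.mem_univ y)
      (by linarith [ht.1, ht.2] : (0:ℝ) ≤ 1 - t) ht.1.le (by ring)
    simp only [smul_eq_mul] at hcv
    rw [slope_def_field]
    have h0 : x + (0:ℝ) • (y - x) = x := by simp
    rw [h0, sub_zero, div_le_iff₀ ht.1, hcomb]
    linarith
  have := le_of_tendsto h2 hev
  linarith

lemma descent_lemma (f : E → ℝ) (f' : E → E) (L : ℝ)
    (hgrad : ∀ x, HasGradientAt f (f' x) x)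
    (hlip : ∀ x y, ‖f' x - f' y‖ ≤ L * ‖x - y‖) (x y : E) :
    f y ≤ f x + ⟪f' x, y - x⟫ + L / 2 * ‖y - x‖ ^ 2 := by
  set d := y - x with hd
  set χ : ℝ → ℝ := fun t => f (x + t • d) - t * ⟪f' x, d⟫ - t ^ 2 * (L / 2 * ‖d‖ ^ 2) with hχdef
  have hχ : ∀ t : ℝ, HasDerivAt χ
      (⟪f' (x + t • d), d⟫ - ⟪f' x, d⟫ - 2 * t * (L / 2 * ‖d‖ ^ 2)) t := by
    intro t
    have h1 := line_hasDerivAt f f' hgrad x d t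
    have h2 : HasDerivAt (fun s : ℝ => s * ⟪f' x, d⟫) ⟪f' x, d⟫ t := by
      simpa using (hasDerivAt_id t).mul_const ⟪f' x, d⟫
    have h3 : HasDerivAt (fun s : ℝ => s ^ 2 * (L / 2 * ‖d‖ ^ 2))
        (2 * t * (L / 2 * ‖d‖ ^ 2)) t := by
      have := (hasDerivAt_pow 2 t).mul_const (L / 2 * ‖d‖ ^ 2)
      simpa [mul_comm] using this
    exact (h1.sub h2).sub h3
  have hanti : AntitoneOn χ (Set.Icc 0 1) := by
    apply antitoneOn_of_deriv_nonpos (convex_Icc 0 1)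
    · exact fun t _ => (hχ t).differentiableAt.continuousAt.continuousWithinAt
    · exact fun t _ => (hχ t).differentiableAt.differentiableWithinAt
    · intro t ht
      rw [interior_Icc] at ht
      rw [(hχ t).deriv]
      have hinner : ⟪f' (x + t • d), d⟫ - ⟪f' x, d⟫ = ⟪f' (x + t • d) - f' x, d⟫ :=
        (inner_sub_left _ _ _).symm
      have hb : ⟪f' (x + t • d) - f' x, d⟫ ≤ L * t * ‖d‖ ^ 2 := by
        calc ⟪f' (x + t • d) - f' x, d⟫ ≤ ‖f' (x + t • d) - f' x‖ * ‖d‖ :=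
              real_inner_le_norm _ _
          _ ≤ (L * ‖(x + t • d) - x‖) * ‖d‖ := by
              have := hlip (x + t • d) x
              have hdn : (0:ℝ) ≤ ‖d‖ := norm_nonneg d
              nlinarith [norm_nonneg (f' (x + t • d) - f' x)]
          _ = L * t * ‖d‖ ^ 2 := by
              simp [norm_smul, abs_of_pos ht.1]
              ring
      rw [hinner]
      nlinarith
  have h01 := hanti (Set.mem_Icc.2 ⟨le_refl 0, zero_le_one⟩)
    (Set.mem_Icc.2 ⟨zero_le_one, le_refl 1⟩) zero_le_one
  have e1 : χ 1 = f y - ⟪f' x, d⟫ - (L / 2 * ‖d‖ ^ 2) := by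
    simp [hχdef, hd]
  have e0 : χ 0 = f x := by simp [hχdef]
  rw [e1, e0] at h01
  linarith

lemma norm_combo_sq (a b : E) (t : ℝ) :
    ‖(1 - t) • a + t • b‖ ^ 2
      = (1 - t) * ‖a‖ ^ 2 + t * ‖b‖ ^ 2 - t * (1 - t) * ‖a - b‖ ^ 2 := by
  rw [← real_inner_self_eq_norm_sq, ← real_inner_self_eq_norm_sq,
    ← real_inner_self_eq_norm_sq, ← real_inner_self_eq_norm_sq]
  simp only [inner_add_add_self, inner_sub_sub_self, inner_smul_left, inner_smul_right,
    RCLike.conj_to_real, real_inner_comm a b]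
  ring

lemma prox_strong_min (g : E → ℝ) (hconvg : ConvexOn ℝ Set.univ g)
    (Linv : ℝ) (hLinv : 0 ≤ Linv) (v p : E)
    (hp : ∀ z : E, 1 / 2 * ‖p - v‖ ^ 2 + Linv * g p ≤ 1 / 2 * ‖z - v‖ ^ 2 + Linv * g z)
    (z : E) :
    1 / 2 * ‖p - v‖ ^ 2 + Linv * g p + 1 / 2 * ‖z - p‖ ^ 2
      ≤ 1 / 2 * ‖z - v‖ ^ 2 + Linv * g z := by
  apply le_of_forall_pos_le_add
  intro ε hε
  set K := ‖z - p‖ ^ 2 with hK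
  have hK0 : 0 ≤ K := sq_nonneg _
  set t : ℝ := min (1/2) (2 * ε / (K + 1)) with ht
  have ht0 : 0 < t := lt_min (by norm_num) (by positivity)
  have ht1 : t < 1 := lt_of_le_of_lt (min_le_left _ _) (by norm_num)
  have hw := hp ((1 - t) • p + t • z)
  have hcomb : (1 - t) • p + t • z - v = (1 - t) • (p - v) + t • (z - v) := by module
  have hgw : g ((1 - t) • p + t • z) ≤ (1 - t) * g p + t * g z := by
    simpa using hconvg.2 (Set.mem_univ p) (Set.mem_univ z) (by linarith) ht0.le (by ring)
  rw [hcomb, norm_combo_sq] at hw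
  have hne : (p - v) - (z - v) = p - z := by abel
  rw [hne] at hw
  have hpz : ‖p - z‖ ^ 2 = K := by rw [hK, norm_sub_rev]
  rw [hpz] at hw
  have key : t * (1 / 2 * ‖p - v‖ ^ 2 + Linv * g p) + 1/2 * t * (1 - t) * K
      ≤ t * (1 / 2 * ‖z - v‖ ^ 2 + Linv * g z) := by
    nlinarith [mul_le_mul_of_nonneg_left hgw hLinv]
  have key2 : 1 / 2 * ‖p - v‖ ^ 2 + Linv * g p + 1/2 * (1 - t) * K
      ≤ 1 / 2 * ‖z - v‖ ^ 2 + Linv * g z := by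
    have := (mul_le_mul_iff_right₀ ht0).mp (by linarith :
      t * (1 / 2 * ‖p - v‖ ^ 2 + Linv * g p + 1/2 * (1 - t) * K)
        ≤ t * (1 / 2 * ‖z - v‖ ^ 2 + Linv * g z))
    exact this
  have htK : 1/2 * t * K ≤ ε := by
    have h1 : t ≤ 2 * ε / (K + 1) := min_le_right _ _
    have h2 : t * K ≤ (2 * ε / (K + 1)) * K := by nlinarith
    have h3 : (2 * ε / (K + 1)) * K ≤ 2 * ε := by
      rw [div_mul_eq_mul_div, div_le_iff₀ (by positivity)]
      nlinarith
    linarith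
  linarith

lemma key_prox_grad (f g : E → ℝ) (f' : E → E) (L : ℝ) (hL : 0 < L)
    (hgrad : ∀ x, HasGradientAt f (f' x) x)
    (hlip : ∀ x y, ‖f' x - f' y‖ ≤ L * ‖x - y‖)
    (hconvf : ConvexOn ℝ Set.univ f) (hconvg : ConvexOn ℝ Set.univ g)
    (x p : E)
    (hp : ∀ z : E, 1 / 2 * ‖p - (x - (1 / L) • f' x)‖ ^ 2 + (1 / L) * g p
        ≤ 1 / 2 * ‖z - (x - (1 / L) • f' x)‖ ^ 2 + (1 / L) * g z)
    (z : E) :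
    f p + g p ≤ f z + g z + L * ⟪x - p, x - z⟫ - L / 2 * ‖x - p‖ ^ 2 := by
  set v := x - (1 / L) • f' x with hv
  have hB := prox_strong_min g hconvg (1 / L) (by positivity) v p hp z
  -- identity: ‖z - v‖² = ‖p - v‖² + 2⟪p - v, z - p⟫ + ‖z - p‖²
  have hid : ‖z - v‖ ^ 2 = ‖p - v‖ ^ 2 + 2 * ⟪p - v, z - p⟫ + ‖z - p‖ ^ 2 := by
    have h := norm_add_sq_real (p - v) (z - p)
    rw [show (p - v) + (z - p) = z - v by abel] at h
    exact h
  -- g p - g z ≤ L * ⟪p - v, z - p⟫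
  have hg1 : (1 / L) * (g p - g z) ≤ ⟪p - v, z - p⟫ := by nlinarith [hB, hid]
  have hg2 : g p - g z ≤ L * ⟪p - v, z - p⟫ := by
    have h4 := mul_le_mul_of_nonneg_left hg1 hL.le
    have h5 : L * ((1 / L) * (g p - g z)) = g p - g z := by
      field_simp
    linarith [h4, h5.symm.le, h5.le]
  -- expand ⟪p - v, z - p⟫
  have hexp : L * ⟪p - v, z - p⟫ = L * ⟪p - x, z - p⟫ + ⟪f' x, z - p⟫ := by
    rw [hv, show p - (x - (1 / L) • f' x) = (p - x) + (1 / L) • f' x by abel,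
      inner_add_left, real_inner_smul_left]
    field_simp
  -- descent and convexity
  have hdes := descent_lemma f f' L hgrad hlip x p
  have hcvx := convex_grad_ineq f f' hgrad hconvf x z
  -- inner rearrangements
  have hcancel : ⟪f' x, p - x⟫ - ⟪f' x, z - x⟫ + ⟪f' x, z - p⟫ = 0 := by
    rw [← inner_sub_right, ← inner_add_right, show (p - x) - (z - x) + (z - p) = 0 by abel,
      inner_zero_right]
  have he2 : L * ⟪p - x, z - p⟫ = L * ⟪x - p, x - z⟫ - L * ‖x - p‖ ^ 2 := by
    have : ⟪p - x, z - p⟫ = ⟪x - p, x - z⟫ - ⟪x - p, x - p⟫ := by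
      rw [show p - x = -(x - p) by abel, show z - p = (x - p) - (x - z) by abel,
        inner_neg_left, inner_sub_right]
      ring
    rw [this, real_inner_self_eq_norm_sq]
    ring
  have hnr : ‖p - x‖ ^ 2 = ‖x - p‖ ^ 2 := by rw [norm_sub_rev]
  rw [hnr] at hdes
  linarith [hdes, hcvx, hg2, hexp, hcancel, he2]

end aux

set_option maxHeartbeats 1000000 in
theorem heb_dist_prox_grad_bound_large_theta {d : ℕ} (L c θ ξ : ℝ)
    (hL : 0 < L) (hc : 0 < c) (hξ : 0 < ξ) (hθ : θ ∈ Set.Ioc (1/2 : ℝ) 1)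
    (f g : EuclideanSpace ℝ (Fin d) → ℝ)
    (f' : EuclideanSpace ℝ (Fin d) → EuclideanSpace ℝ (Fin d))
    (hconvf : ConvexOn ℝ Set.univ f)
    (hgrad : ∀ x, HasGradientAt f (f' x) x)
    (hlip : ∀ x y, ‖f' x - f' y‖ ≤ L * ‖x - y‖)
    (hconvg : ConvexOn ℝ Set.univ g) (hlsc : LowerSemicontinuous g)
    (T : EuclideanSpace ℝ (Fin d) → EuclideanSpace ℝ (Fin d))
    (hT : ∀ x z, 1 / 2 * ‖T x - (x - (1 / L) • f' x)‖ ^ 2 + (1 / L) * g (T x)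
        ≤ 1 / 2 * ‖z - (x - (1 / L) • f' x)‖ ^ 2 + (1 / L) * g z)
    (Ω : Set (EuclideanSpace ℝ (Fin d)))
    (hΩ : Ω = {z | ∀ y, f z + g z ≤ f y + g y}) (hne : Ω.Nonempty)
    (Fstar : ℝ) (hfs : ∀ z ∈ Ω, f z + g z = Fstar)
    (heb : ∀ x, f x + g x - Fstar ≤ ξ →
        Metric.infDist x Ω ≤ c * (f x + g x - Fstar) ^ θ)
    (x : EuclideanSpace ℝ (Fin d)) (hx : f x + g x - Fstar ≤ ξ) :
    Metric.infDist x Ω ≤ (2 / L + 2 * c ^ 2 * ξ ^ (2 * θ - 1)) * ‖L • (x - T x)‖ := by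
  obtain ⟨hθ1, hθ2⟩ := hθ
  set p := T x with hpdef
  have key : ∀ z, f p + g p ≤ f z + g z + L * ⟪x - p, x - z⟫ - L / 2 * ‖x - p‖ ^ 2 :=
    key_prox_grad f g f' L hL hgrad hlip hconvf hconvg x p (hT x)
  obtain ⟨z₀, hz₀⟩ := hne
  have hmin : ∀ y, f z₀ + g z₀ ≤ f y + g y := by
    rw [hΩ] at hz₀; exact hz₀
  have hFz₀ : f z₀ + g z₀ = Fstar := hfs z₀ hz₀
  set nxp := ‖x - p‖ with hnxp
  have hnxp0 : (0:ℝ) ≤ nxp := norm_nonneg _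
  have hsval : ‖L • (x - T x)‖ = L * nxp := by
    rw [← hpdef, norm_smul, Real.norm_eq_abs, abs_of_pos hL]
  set r' := f p + g p - Fstar with hr'def
  have hr'0 : 0 ≤ r' := by
    have := hmin p
    rw [hFz₀] at this
    simp only [hr'def]
    linarith
  have hx0 : ⟪x - p, x - x⟫ = (0:ℝ) := by simp
  have hFpx : f p + g p ≤ f x + g x := by
    have hk := key x
    rw [hx0] at hk
    nlinarith [sq_nonneg nxp]
  have hr'ξ : r' ≤ ξ := by simp only [hr'def]; linarith
  have ht : Metric.infDist p Ω ≤ c * r' ^ θ := heb p hr'ξ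
  set t := Metric.infDist p Ω with htdef
  have ht0 : 0 ≤ t := Metric.infDist_nonneg
  set C := c ^ 2 * ξ ^ (2 * θ - 1) with hC
  have hC0 : 0 < C := by
    have : (0:ℝ) < ξ ^ (2 * θ - 1) := Real.rpow_pos_of_pos hξ _
    positivity
  have hDt : Metric.infDist x Ω ≤ nxp + t := by
    have h := Metric.infDist_le_infDist_add_dist (x := x) (y := p) (s := Ω)
    rw [dist_eq_norm] at h
    linarith
  have hmain : t ≤ nxp + 2 * C * (L * nxp) := by
    rcases eq_or_lt_of_le hr'0 with h0 | hr'pos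
    · have hz : c * r' ^ θ = 0 := by
        rw [← h0, Real.zero_rpow (by linarith : θ ≠ 0), mul_zero]
      have : t ≤ 0 := by rw [hz] at ht; exact ht
      have hnn : 0 ≤ C * L * nxp := mul_nonneg (mul_nonneg hC0.le hL.le) hnxp0
      nlinarith [hnn]
    · have hxpne : 0 < nxp := by
        rcases lt_or_eq_of_le hnxp0 with h | h
        · exact h
        · exfalso
          have hsub : x - p = 0 := by
            rw [← norm_eq_zero, ← hnxp, ← h]
          have hk := key z₀
          rw [hsub] at hk
          simp only [inner_zero_left, norm_zero] at hk
          rw [hFz₀] at hk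
          simp only [hr'def] at hr'pos
          nlinarith
      -- t² ≤ C * r'
      have hsq : t ^ 2 ≤ C * r' := by
        have h1 : t ^ 2 ≤ (c * r' ^ θ) ^ 2 := by nlinarith
        have h2 : (r' ^ θ) ^ 2 = r' ^ (2 * θ - 1) * r' := by
          have a1 : (r' ^ θ) ^ 2 = r' ^ (θ + θ) := by rw [sq, ← Real.rpow_add hr'pos]
          have a2 : r' ^ (2 * θ - 1) * r' ^ (1:ℝ) = r' ^ (2 * θ - 1 + 1) :=
            (Real.rpow_add hr'pos _ _).symm
          rw [Real.rpow_one] at a2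
          rw [a1, show θ + θ = 2 * θ - 1 + 1 by ring, ← a2]
        have h3 : r' ^ (2 * θ - 1) ≤ ξ ^ (2 * θ - 1) :=
          Real.rpow_le_rpow hr'pos.le hr'ξ (by linarith)
        have h4 : (c * r' ^ θ) ^ 2 = c ^ 2 * ((r' ^ θ) ^ 2) := by ring
        rw [h4, h2] at h1
        have h5 : c ^ 2 * (r' ^ (2 * θ - 1) * r') ≤ c ^ 2 * (ξ ^ (2 * θ - 1) * r') := by
          have := mul_le_mul_of_nonneg_right h3 hr'pos.le
          nlinarith
        calc t ^ 2 ≤ c ^ 2 * (r' ^ (2 * θ - 1) * r') := h1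
          _ ≤ c ^ 2 * (ξ ^ (2 * θ - 1) * r') := h5
          _ = C * r' := by rw [hC]; ring
      -- r' ≤ L*nxp*t + L/2*nxp²
      have hrb : r' ≤ L * nxp * t + L / 2 * nxp ^ 2 := by
        have hpos : (0:ℝ) < L * nxp := mul_pos hL hxpne
        have hzb : ∀ z ∈ Ω, r' + L / 2 * nxp ^ 2 ≤ L * nxp * dist x z := by
          intro z hz
          have hk := key z
          have hFz : f z + g z = Fstar := hfs z hz
          have hip : ⟪x - p, x - z⟫ ≤ nxp * ‖x - z‖ := by
            have := real_inner_le_norm (x - p) (x - z)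
            rw [← hnxp] at this
            exact this
          rw [dist_eq_norm]
          have hip2 : L * ⟪x - p, x - z⟫ ≤ L * (nxp * ‖x - z‖) :=
            mul_le_mul_of_nonneg_left hip hL.le
          simp only [hr'def]
          nlinarith
        have hdiv : (r' + L / 2 * nxp ^ 2) / (L * nxp) ≤ Metric.infDist x Ω := by
          rw [Metric.infDist_eq_iInf]
          have : Nonempty ↥Ω := Set.Nonempty.to_subtype ⟨z₀, hz₀⟩
          apply le_ciInf
          rintro ⟨z, hz⟩
          rw [div_le_iff₀ hpos]
          have := hzb z hz
          linarith [this]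
        have hback := (div_le_iff₀ hpos).mp hdiv
        have h6 : Metric.infDist x Ω * (L * nxp) ≤ (nxp + t) * (L * nxp) :=
          mul_le_mul_of_nonneg_right hDt hpos.le
        nlinarith
      by_cases hcase : t ≤ nxp
      · nlinarith
      · push_neg at hcase
        have hq : t ^ 2 ≤ C * L * nxp * t + C * (L / 2) * nxp ^ 2 := by nlinarith
        have hnn : nxp ^ 2 ≤ nxp * t := by nlinarith
        have h7 : t ^ 2 ≤ (3 / 2) * (C * L) * (nxp * t) := by nlinarith
        nlinarith
  rw [hsval]
  have hfinal : (2 / L + 2 * c ^ 2 * ξ ^ (2 * θ - 1)) * (L * nxp)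
      = 2 * nxp + 2 * C * (L * nxp) := by
    rw [hC]
    field_simp
  rw [hfinal]
  linarith
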